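/- Given a partition of a finite set I of size n into nonempty blocks and a cyclic order on the blocks, the set of labelings making it a spin necklace is in bijection with Z/nZ: any single edge label determines all others uniquely, and every choice of one label extends to a valid labeling. -/

import Mathlib

/-- Given a partition of `Fin n` into `m` nonempty blocks with a cyclic order (blocks
indexed by `ZMod m`), a **valid labeling** assigns to each edge of the cycle a label in
`{1,…,n}` (`lab i` labels the edge from block `i` to block `i+1`) such that the outgoing
label of each block is congruent mod `n` to its incoming label plus the size of the
block; this is exactly the data making the partition a spin necklace. -/
def ValidLab (n m : ℕ) (B : ZMod m → Finset (Fin n)) (lab : ZMod m → ℕ) : Prop :=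
  (∀ i, 1 ≤ lab i ∧ lab i ≤ n) ∧
    ∀ i, lab (i + 1) % n = (lab i + (B (i + 1)).card) % n

/-- The representative in `[1, n]` of a residue class mod `n`. -/
def repLab (n x : ℕ) : ℕ := if x % n = 0 then n else x % n

lemma repLab_mod (n x : ℕ) (hn : 0 < n) : repLab n x % n = x % n := by
  unfold repLab
  split_ifs with h
  · simp [h, Nat.mod_self]
  · exact Nat.mod_mod_of_dvd x dvd_rfl

lemma repLab_bounds (n x : ℕ) (hn : 0 < n) : 1 ≤ repLab n x ∧ repLab n x ≤ n := by
  unfold repLab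
  split_ifs with h
  · omega
  · have := Nat.mod_lt x hn
    omega

lemma repLab_uniq {n a b : ℕ} (ha1 : 1 ≤ a) (ha2 : a ≤ n) (hb1 : 1 ≤ b) (hb2 : b ≤ n)
    (h : a % n = b % n) : a = b := by
  rcases eq_or_lt_of_le ha2 with rfl | ha
  · rcases eq_or_lt_of_le hb2 with rfl | hb
    · rfl
    · rw [Nat.mod_self, Nat.mod_eq_of_lt hb] at h; omega
  · rcases eq_or_lt_of_le hb2 with rfl | hb
    · rw [Nat.mod_self, Nat.mod_eq_of_lt ha] at h; omega
    · rw [Nat.mod_eq_of_lt ha, Nat.mod_eq_of_lt hb] at h; exact h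

/-- **Labelings of a necklace are a `ZMod n`-torsor.** Given a partition of a set of size
`n` into nonempty blocks with a cyclic order, the valid spin-necklace labelings are in
bijection with `ZMod n` via the label of a fixed edge: any single edge label determines all
others uniquely, and every residue arises as the label of that edge. -/
theorem validLab_equiv_zmod (n m : ℕ) (hn : 0 < n) (hm : 0 < m)
    (B : ZMod m → Finset (Fin n))
    (hne : ∀ i, (B i).Nonempty)
    (hdisj : ∀ i j, i ≠ j → Disjoint (B i) (B j))
    (hcov : ∀ x : Fin n, ∃ i, x ∈ B i) :
    Function.Bijective
      (fun lab : {lab : ZMod m → ℕ // ValidLab n m B lab} =>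
        ((lab.1 0 : ℕ) : ZMod n)) := by
  haveI : NeZero m := ⟨hm.ne'⟩
  haveI : NeZero n := ⟨hn.ne'⟩
  -- total size of the blocks is n
  have hsum : ∑ i : ZMod m, (B i).card = n := by
    have hunion : Finset.univ.biUnion B = (Finset.univ : Finset (Fin n)) := by
      ext x
      simp only [Finset.mem_biUnion, Finset.mem_univ, true_and, iff_true]
      exact hcov x
    have := Finset.card_biUnion (s := (Finset.univ : Finset (ZMod m))) (t := B)
      (fun i _ j _ hij => hdisj i j hij)
    rw [hunion] at this
    simpa [Finset.card_univ] using this.symm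
  constructor
  · -- injectivity
    rintro ⟨lab, hb, hrec⟩ ⟨lab', hb', hrec'⟩ h
    simp only at h
    rw [ZMod.natCast_eq_natCast_iff] at h
    have key : ∀ k : ℕ, lab ((k : ℕ) : ZMod m) % n = lab' ((k : ℕ) : ZMod m) % n := by
      intro k
      induction k with
      | zero => simpa [Nat.ModEq] using h
      | succ k ih =>
        have hcast : (((k + 1 : ℕ)) : ZMod m) = ((k : ℕ) : ZMod m) + 1 := by push_cast; ring
        rw [hcast, hrec, hrec', Nat.add_mod, ih, ← Nat.add_mod]
    ext i
    have hi : ((i.val : ℕ) : ZMod m) = i := ZMod.natCast_rightInverse i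
    have := key i.val
    rw [hi] at this
    exact repLab_uniq (hb i).1 (hb i).2 (hb' i).1 (hb' i).2 this
  · -- surjectivity
    intro c
    set g : ℕ → ℕ := fun k => c.val + ∑ j ∈ Finset.range k, (B ((j : ZMod m) + 1)).card
      with hg
    have hrange : ∑ j ∈ Finset.range m, (B ((j : ZMod m) + 1)).card = n := by
      refine Eq.trans ?_ hsum
      refine Finset.sum_nbij' (fun j => ((j : ZMod m) + 1)) (fun i => (i - 1).val)
        ?_ ?_ ?_ ?_ ?_
      · intro a _; exact Finset.mem_univ _
      · intro a _; exact Finset.mem_range.mpr (ZMod.val_lt _)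
      · intro a ha
        rw [Finset.mem_range] at ha
        show (((a : ℕ) : ZMod m) + 1 - 1).val = a
        have h : ((a : ℕ) : ZMod m) + 1 - 1 = ((a : ℕ) : ZMod m) := by ring
        rw [h, ZMod.val_cast_of_lt ha]
      · intro i _
        show (((i - 1).val : ℕ) : ZMod m) + 1 = i
        rw [ZMod.natCast_rightInverse (i - 1)]; ring
      · intro a _; rfl
    have hgstep : ∀ k, g (k + 1) = g k + (B ((k : ZMod m) + 1)).card := by
      intro k; simp [hg, Finset.sum_range_succ, Nat.add_assoc]
    have hgm : g m = c.val + n := by simp [hg, hrange]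
    refine ⟨⟨fun i => repLab n (g i.val), ⟨fun i => repLab_bounds n _ hn, ?_⟩⟩, ?_⟩
    · intro i
      show repLab n (g (i + 1).val) % n = (repLab n (g i.val) + (B (i + 1)).card) % n
      obtain ⟨k, hk⟩ : ∃ k, k = i.val := ⟨i.val, rfl⟩
      have hkm : k < m := hk ▸ ZMod.val_lt i
      have hi : ((k : ℕ) : ZMod m) = i := by rw [hk]; exact ZMod.natCast_rightInverse i
      rw [← hk]
      rcases eq_or_lt_of_le (Nat.succ_le_of_lt hkm) with heq | hlt
      · -- k + 1 = m : wrap around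
        have heq' : k + 1 = m := heq
        have hi1 : i + 1 = 0 := by
          rw [← hi, show ((k : ℕ) : ZMod m) + 1 = ((k + 1 : ℕ) : ZMod m) by push_cast; ring,
            heq']
          exact ZMod.natCast_self m
        have hB0 : ((k : ℕ) : ZMod m) + 1 = (0 : ZMod m) := by rw [hi, hi1]
        have h2 : g m = g k + (B (0 : ZMod m)).card := by
          have h3 := hgstep k
          rw [hB0, heq'] at h3
          exact h3
        rw [hi1]
        simp only [ZMod.val_zero]
        calc repLab n (g 0) % n = g 0 % n := repLab_mod _ _ hn
          _ = g m % n := by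
              have e0 : g 0 = c.val := by simp [hg]
              rw [e0, hgm, Nat.add_mod_right]
          _ = (g k + (B (0 : ZMod m)).card) % n := by rw [h2]
          _ = (repLab n (g k) + (B (0 : ZMod m)).card) % n := by
              conv_rhs => rw [Nat.add_mod, repLab_mod _ _ hn, ← Nat.add_mod]
      · -- k + 1 < m
        have hi1 : i + 1 = ((k + 1 : ℕ) : ZMod m) := by rw [← hi]; push_cast; ring
        have hval : (i + 1).val = k + 1 := by rw [hi1]; exact ZMod.val_cast_of_lt hlt
        have hB1 : ((k : ℕ) : ZMod m) + 1 = i + 1 := by rw [hi]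
        rw [hval]
        calc repLab n (g (k + 1)) % n = g (k + 1) % n := repLab_mod _ _ hn
          _ = (g k + (B (i + 1)).card) % n := by rw [hgstep k, hB1]
          _ = (repLab n (g k) + (B (i + 1)).card) % n := by
              conv_rhs => rw [Nat.add_mod, repLab_mod _ _ hn, ← Nat.add_mod]
    · show ((repLab n (g (0 : ZMod m).val) : ℕ) : ZMod n) = c
      have h0 : g (0 : ZMod m).val = c.val := by simp [hg]
      rw [h0]
      have hcast : ((repLab n c.val : ℕ) : ZMod n) = ((c.val : ℕ) : ZMod n) := by
        rw [ZMod.natCast_eq_natCast_iff]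
        exact repLab_mod n c.val hn
      rw [hcast]
      exact ZMod.natCast_rightInverse c
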